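/- Assume the standing assumptions on ψ and let J satisfy the jumping-kernel bounds with constant C̄. Define ℰ(f,f) := ∫_{ℝ^d}∫_{ℝ^d} (f(x)−f(y))² J(x,y) dx dy ∈ [0,∞]. Then there exists a constant C>0, depending only on d, C̄, β₁, β₂, C_L, C_U, such that for every bounded measurable f ∈ L²(ℝ^d) and every r>0: (1/r^d)·∫_{ℝ^d}∫_{B(x,r)} (f(x)−f(y))² dy dx ≤ C·Φ(r)·ℰ(f,f), where B(x,r) := {y∈ℝ^d : |x−y|<r}. -/

import Mathlib

open MeasureTheory Set
open scoped ENNReal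

abbrev Euc (d : ℕ) := EuclideanSpace ℝ (Fin d)

set_option maxHeartbeats 2000000 in
/-- Under the standing assumptions on `ψ` and with the jumping
kernel `J` comparable to `1/(|x-y|^d ψ(|x-y|))`, defining
`ℰ(f,f) = ∫∫ (f(x)-f(y))² J(x,y) dx dy ∈ [0,∞]`, there is `C > 0` (depending only
on `d, C̄, β₁, β₂, C_L, C_U`) such that for every bounded measurable `f ∈ L²(ℝ^d)`
and every `r > 0`:
`(1/r^d) ∫_{ℝ^d} ∫_{B(x,r)} (f(x)-f(y))² dy dx ≤ C Φ(r) ℰ(f,f)`. -/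
theorem stmt_17 (d : ℕ) (hd : 1 ≤ d) (ψ Φ : ℝ → ℝ) (β₁ β₂ CL CU : ℝ)
    (hβ₁ : 0 < β₁) (hβ₁₂ : β₁ ≤ β₂) (hCL : 0 < CL) (hCL1 : CL ≤ 1) (hCU : 1 ≤ CU)
    (hψ_pos : ∀ r : ℝ, 0 < r → 0 < ψ r)
    (hψ_mono : ∀ r s : ℝ, 0 < r → r ≤ s → ψ r ≤ ψ s)
    (hψL : ∀ r R : ℝ, 0 < r → r ≤ R → CL * (R / r) ^ β₁ ≤ ψ R / ψ r)
    (hψU : ∀ r R : ℝ, 0 < r → r ≤ R → ψ R / ψ r ≤ CU * (R / r) ^ β₂)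
    (hψ_int : ∀ r : ℝ, 0 < r → IntegrableOn (fun s => s / ψ s) (Ioo 0 r))
    (hΦ : ∀ r : ℝ, 0 < r → Φ r = r ^ 2 / (2 * ∫ s in Ioo (0:ℝ) r, s / ψ s))
    (J : EuclideanSpace ℝ (Fin d) → EuclideanSpace ℝ (Fin d) → ℝ) (Cb : ℝ) (hCb : 1 ≤ Cb)
    (hJ_symm : ∀ x y, J x y = J y x)
    (hJ_meas : Measurable (Function.uncurry J))
    (hJ_lower : ∀ x y, x ≠ y → Cb⁻¹ / (dist x y ^ d * ψ (dist x y)) ≤ J x y)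
    (hJ_upper : ∀ x y, x ≠ y → J x y ≤ Cb / (dist x y ^ d * ψ (dist x y))) :
    ∃ C : ℝ, 0 < C ∧
      ∀ f : EuclideanSpace ℝ (Fin d) → ℝ,
        Measurable f → MemLp f 2 volume → (∃ M : ℝ, ∀ x, |f x| ≤ M) →
        ∀ r : ℝ, 0 < r →
          ENNReal.ofReal (1 / r ^ d) *
            ∫⁻ x, ∫⁻ y in Metric.ball x r, ENNReal.ofReal ((f x - f y) ^ 2) ≤
          ENNReal.ofReal (C * Φ r) *
            ∫⁻ x, ∫⁻ y, ENNReal.ofReal ((f x - f y) ^ 2 * J x y) := by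
  classical
  have hCb0 : (0:ℝ) < Cb := lt_of_lt_of_le one_pos hCb
  refine ⟨2 ^ (d + 3) * Cb, by positivity, ?_⟩
  intro f hf _hf2 _hbd r hr
  -- measurable monotone surrogate for ψ
  set ψm : ℝ → ℝ := fun t => if 0 < t then ψ t else 0 with hψm_def
  have hψm_mono : Monotone ψm := by
    intro a b hab
    by_cases ha : 0 < a
    · have hb : 0 < b := lt_of_lt_of_le ha hab
      simpa [ψm, ha, hb] using hψ_mono a b ha hab
    · by_cases hb : 0 < b
      · simpa [ψm, ha, hb] using (hψ_pos b hb).le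
      · simp [ψm, ha, hb]
  have hψm_meas : Measurable ψm := hψm_mono.measurable
  have hψm_eq : ∀ t : ℝ, 0 < t → ψm t = ψ t := fun t ht => if_pos ht
  -- the function g
  set g : Euc d → ℝ≥0∞ :=
    fun h => ∫⁻ x, ENNReal.ofReal ((f x - f (x + h)) ^ 2) with hg_def
  have hker : Measurable fun p : Euc d × Euc d =>
      ENNReal.ofReal ((f p.1 - f (p.1 + p.2)) ^ 2) := by
    apply Measurable.ennreal_ofReal
    exact ((hf.comp measurable_fst).sub (hf.comp (measurable_fst.add measurable_snd))).pow_const 2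
  have hg_meas : Measurable g := Measurable.lintegral_prod_left hker
  have hg0 : g 0 = 0 := by simp [hg_def]
  -- G t
  set G : ℝ → ℝ≥0∞ := fun t => ∫⁻ h in Metric.ball (0 : Euc d) t, g h with hG_def
  have hG_mono : Monotone G := by
    intro a b hab
    have : (∫⁻ h in Metric.ball (0 : Euc d) a, g h) ≤
        ∫⁻ h in Metric.ball (0 : Euc d) b, g h :=
      lintegral_mono_set (Metric.ball_subset_ball hab)
    simpa [hG_def] using this
  have hG_meas : Measurable G := hG_mono.measurable
  have hLHS : (∫⁻ x, ∫⁻ y in Metric.ball x r, ENNReal.ofReal ((f x - f y) ^ 2))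
      = G r := by
    have hGr : G r = ∫⁻ h in Metric.ball (0 : Euc d) r, g h := by rw [hG_def]
    rw [hGr]
    set K : Euc d × Euc d → ℝ≥0∞ := fun p =>
      ((Metric.ball (0 : Euc d) r).indicator (fun _ => (1 : ℝ≥0∞)) p.2) *
        ENNReal.ofReal ((f p.1 - f (p.1 + p.2)) ^ 2) with hK_def
    have hK_meas : Measurable K :=
      (((measurable_const.indicator measurableSet_ball).comp measurable_snd)).mul hker
    have step1 : ∀ x : Euc d, (∫⁻ y in Metric.ball x r, ENNReal.ofReal ((f x - f y) ^ 2))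
        = ∫⁻ h, K (x, h) := by
      intro x
      rw [← lintegral_indicator measurableSet_ball]
      have := (measurePreserving_add_right (volume : Measure (Euc d)) x).lintegral_comp
        (f := fun y => (Metric.ball x r).indicator (fun y' => ENNReal.ofReal ((f x - f y') ^ 2)) y)
        ((Measurable.ennreal_ofReal ((measurable_const.sub hf).pow_const 2)).indicator
          measurableSet_ball)
      rw [← this]
      refine lintegral_congr fun h => ?_
      by_cases hh : h ∈ Metric.ball (0 : Euc d) r
      · have h1 : h + x ∈ Metric.ball x r := by
          simpa [Metric.mem_ball, dist_eq_norm] using hh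
        simp only [K]
        rw [Set.indicator_of_mem h1, Set.indicator_of_mem hh, one_mul, add_comm h x]
      · have h1 : h + x ∉ Metric.ball x r := by
          simpa [Metric.mem_ball, dist_eq_norm] using hh
        simp only [K]
        rw [Set.indicator_of_notMem h1, Set.indicator_of_notMem hh, zero_mul]
    calc (∫⁻ x, ∫⁻ y in Metric.ball x r, ENNReal.ofReal ((f x - f y) ^ 2))
        = ∫⁻ x, ∫⁻ h, K (x, h) := lintegral_congr step1
      _ = ∫⁻ h, ∫⁻ x, K (x, h) := lintegral_lintegral_swap hK_meas.aemeasurable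
      _ = ∫⁻ h, (Metric.ball (0 : Euc d) r).indicator (fun _ => (1:ℝ≥0∞)) h * g h := by
          refine lintegral_congr fun h => ?_
          rw [hg_def]
          simp only [hK_def]
          rw [lintegral_const_mul _ (by
            exact Measurable.ennreal_ofReal (((hf.comp measurable_id).sub
              (hf.comp (measurable_add_const h))).pow_const 2))]
      _ = ∫⁻ h in Metric.ball (0 : Euc d) r, g h := by
          rw [← lintegral_indicator measurableSet_ball]
          refine lintegral_congr fun h => ?_
          by_cases hh : h ∈ Metric.ball (0 : Euc d) r
          · simp [indicator_of_mem, hh]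
          · simp [indicator_of_notMem, hh]

  have hchain : ∀ (u : Euc d) (n : ℕ), g ((n : ℝ) • u) ≤ (n : ℝ≥0∞) ^ 2 * g u := by
    intro u n
    have hker1 : ∀ c : Euc d, Measurable fun x : Euc d =>
        ENNReal.ofReal ((f (x + c) - f (x + c + u)) ^ 2) := by
      intro c
      apply Measurable.ennreal_ofReal
      exact ((hf.comp (measurable_add_const c)).sub
        (hf.comp ((measurable_add_const c).add_const u))).pow_const 2
    have key : ∀ x : Euc d, (f x - f (x + (n : ℝ) • u)) ^ 2 ≤
        n * ∑ i ∈ Finset.range n, (f (x + (i : ℝ) • u) - f (x + (i : ℝ) • u + u)) ^ 2 := by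
      intro x
      have h1 : ∀ i : ℕ, x + (i : ℝ) • u + u = x + ((i + 1 : ℕ) : ℝ) • u := by
        intro i; push_cast; rw [add_smul, one_smul, ← add_assoc]
      have tele : ∑ i ∈ Finset.range n, (f (x + (i : ℝ) • u) - f (x + (i : ℝ) • u + u))
          = f x - f (x + (n : ℝ) • u) := by
        calc ∑ i ∈ Finset.range n, (f (x + (i : ℝ) • u) - f (x + (i : ℝ) • u + u))
            = ∑ i ∈ Finset.range n, ((fun j : ℕ => f (x + (j : ℝ) • u)) i
                - (fun j : ℕ => f (x + (j : ℝ) • u)) (i + 1)) := by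
              refine Finset.sum_congr rfl fun i _ => ?_
              simp only []
              rw [h1 i]
          _ = f (x + ((0 : ℕ) : ℝ) • u) - f (x + (n : ℝ) • u) := Finset.sum_range_sub' _ n
          _ = f x - f (x + (n : ℝ) • u) := by norm_num
      calc (f x - f (x + (n : ℝ) • u)) ^ 2
          = (∑ i ∈ Finset.range n, (f (x + (i : ℝ) • u) - f (x + (i : ℝ) • u + u))) ^ 2 := by
            rw [tele]
        _ ≤ n * ∑ i ∈ Finset.range n, (f (x + (i : ℝ) • u) - f (x + (i : ℝ) • u + u)) ^ 2 := by
            simpa using sq_sum_le_card_mul_sum_sq (s := Finset.range n)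
              (f := fun i => f (x + (i : ℝ) • u) - f (x + (i : ℝ) • u + u))
    calc g ((n : ℝ) • u)
        ≤ ∫⁻ x, ENNReal.ofReal (n * ∑ i ∈ Finset.range n,
            (f (x + (i : ℝ) • u) - f (x + (i : ℝ) • u + u)) ^ 2) := by
          rw [hg_def]
          exact lintegral_mono fun x => ENNReal.ofReal_le_ofReal (key x)
      _ = ∫⁻ x, (n : ℝ≥0∞) * ∑ i ∈ Finset.range n,
            ENNReal.ofReal ((f (x + (i : ℝ) • u) - f (x + (i : ℝ) • u + u)) ^ 2) := by
          refine lintegral_congr fun x => ?_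
          rw [ENNReal.ofReal_mul (by positivity), ENNReal.ofReal_natCast,
            ENNReal.ofReal_sum_of_nonneg (fun i _ => sq_nonneg _)]
      _ = (n : ℝ≥0∞) * ∑ i ∈ Finset.range n, ∫⁻ x,
            ENNReal.ofReal ((f (x + (i : ℝ) • u) - f (x + (i : ℝ) • u + u)) ^ 2) := by
          have hms : Measurable fun x : Euc d => ∑ i ∈ Finset.range n,
              ENNReal.ofReal ((f (x + (i : ℝ) • u) - f (x + (i : ℝ) • u + u)) ^ 2) := by
            exact Finset.measurable_sum _ fun i _ => hker1 ((i : ℝ) • u)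
          have hsum : (∫⁻ x : Euc d, ∑ i ∈ Finset.range n,
              ENNReal.ofReal ((f (x + (i : ℝ) • u) - f (x + (i : ℝ) • u + u)) ^ 2))
              = ∑ i ∈ Finset.range n, ∫⁻ x : Euc d,
              ENNReal.ofReal ((f (x + (i : ℝ) • u) - f (x + (i : ℝ) • u + u)) ^ 2) := by
            exact lintegral_finset_sum _ (fun i _ => hker1 ((i : ℝ) • u))
          rw [lintegral_const_mul _ hms, hsum]
      _ = (n : ℝ≥0∞) * ∑ _i ∈ Finset.range n, g u := by
          congr 1
          refine Finset.sum_congr rfl fun i _ => ?_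
          rw [hg_def]
          exact (measurePreserving_add_right (volume : Measure (Euc d))
            ((i : ℝ) • u)).lintegral_comp
            (f := fun z => ENNReal.ofReal ((f z - f (z + u)) ^ 2))
            (Measurable.ennreal_ofReal ((hf.sub (hf.comp (measurable_add_const u))).pow_const 2))
      _ = (n : ℝ≥0∞) ^ 2 * g u := by
          rw [Finset.sum_const, Finset.card_range, nsmul_eq_mul, ← mul_assoc, sq]

  have hGt : ∀ t : ℝ, 0 < t → t ≤ r →
      ENNReal.ofReal ((t / (2 * r)) ^ (d + 2)) * G r ≤ G t := by
    have hGscale : ∀ n : ℕ, 0 < n → G r ≤ (n : ℝ≥0∞) ^ (d + 2) * G (r / n) := by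
      intro n hn
      have hnR : ((n : ℝ)) ≠ 0 := Nat.cast_ne_zero.2 hn.ne'
      set c : ℝ := ((n : ℝ))⁻¹ with hc_def
      have hc0 : c ≠ 0 := inv_ne_zero hnR
      have hcpos : 0 < c := inv_pos.2 (by exact_mod_cast hn)
      have hm : Measurable fun h : Euc d => g (c • h) := hg_meas.comp (measurable_const_smul c)
      have step1 : G r ≤ (n : ℝ≥0∞) ^ 2 * ∫⁻ h in Metric.ball (0 : Euc d) r, g (c • h) := by
        have hGr : G r = ∫⁻ h in Metric.ball (0 : Euc d) r, g h := by rw [hG_def]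
        rw [hGr, ← lintegral_const_mul _ hm]
        refine lintegral_mono fun h => ?_
        have hsm : ((n : ℝ)) • (c • h) = h := by
          rw [smul_smul, hc_def, mul_inv_cancel₀ hnR, one_smul]
        calc g h = g (((n : ℝ)) • (c • h)) := by rw [hsm]
          _ ≤ (n : ℝ≥0∞) ^ 2 * g (c • h) := hchain (c • h) n
      have hmembl : ∀ h : Euc d, c • h ∈ Metric.ball (0 : Euc d) (c * r)
          ↔ h ∈ Metric.ball (0 : Euc d) r := by
        intro h
        simp only [mem_ball_zero_iff, norm_smul, Real.norm_eq_abs, abs_of_pos hcpos]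
        exact mul_lt_mul_iff_right₀ hcpos
      have step2 : (∫⁻ h in Metric.ball (0 : Euc d) r, g (c • h))
          = ENNReal.ofReal ((n : ℝ) ^ d) * G (r / n) := by
        calc (∫⁻ h in Metric.ball (0 : Euc d) r, g (c • h))
            = ∫⁻ h, (Metric.ball (0 : Euc d) (c * r)).indicator g (c • h) := by
              rw [← lintegral_indicator measurableSet_ball]
              refine lintegral_congr fun h => ?_
              by_cases hh : h ∈ Metric.ball (0 : Euc d) r
              · rw [Set.indicator_of_mem hh, Set.indicator_of_mem ((hmembl h).2 hh)]
              · rw [Set.indicator_of_notMem hh,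
                  Set.indicator_of_notMem (fun hc' => hh ((hmembl h).1 hc'))]
          _ = ∫⁻ y, (Metric.ball (0 : Euc d) (c * r)).indicator g y
                ∂(Measure.map (c • ·) volume) := by
              rw [lintegral_map (hg_meas.indicator measurableSet_ball) (measurable_const_smul c)]
          _ = ENNReal.ofReal ((n : ℝ) ^ d) * G (r / n) := by
              rw [Measure.map_addHaar_smul volume hc0, finrank_euclideanSpace_fin,
                lintegral_smul_measure, lintegral_indicator measurableSet_ball, hG_def]
              have h1 : |(c ^ d)⁻¹| = (n : ℝ) ^ d := by
                rw [hc_def, inv_pow, inv_inv, abs_of_nonneg (by positivity)]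
              have h2 : c * r = r / n := by rw [hc_def, inv_mul_eq_div]
              rw [h1, h2]
              rfl
      calc G r ≤ (n : ℝ≥0∞) ^ 2 * (ENNReal.ofReal ((n : ℝ) ^ d) * G (r / n)) := by
            rw [← step2]; exact step1
        _ = (n : ℝ≥0∞) ^ (d + 2) * G (r / n) := by
            rw [ENNReal.ofReal_pow (Nat.cast_nonneg n), ENNReal.ofReal_natCast, ← mul_assoc,
              ← pow_add]
            ring_nf
    intro t ht htr
    set n : ℕ := ⌈r / t⌉₊ with hn_def
    have hrt1 : 1 ≤ r / t := (one_le_div ht).2 htr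
    have hn0 : 0 < n := Nat.ceil_pos.2 (by linarith)
    have hnpos : (0 : ℝ) < n := by exact_mod_cast hn0
    have hle : r / (n : ℝ) ≤ t := by
      rw [div_le_iff₀ hnpos]
      have h1 : (r / t) * t ≤ (n : ℝ) * t := mul_le_mul_of_nonneg_right (Nat.le_ceil _) ht.le
      have h2 : (r / t) * t = r := div_mul_cancel₀ r ht.ne'
      nlinarith
    have hnle : (n : ℝ) ≤ 2 * r / t := by
      have h1 : ((n : ℝ)) < r / t + 1 := Nat.ceil_lt_add_one (by positivity)
      have h2 : r / t + 1 ≤ 2 * (r / t) := by linarith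
      calc (n : ℝ) ≤ 2 * (r / t) := by linarith
        _ = 2 * r / t := by ring
    have hmain : G r ≤ ENNReal.ofReal ((2 * r / t) ^ (d + 2)) * G t := by
      calc G r ≤ (n : ℝ≥0∞) ^ (d + 2) * G (r / n) := hGscale n hn0
        _ ≤ ENNReal.ofReal ((2 * r / t) ^ (d + 2)) * G t := by
            apply mul_le_mul'
            · rw [← ENNReal.ofReal_natCast n, ← ENNReal.ofReal_pow (Nat.cast_nonneg n)]
              exact ENNReal.ofReal_le_ofReal (pow_le_pow_left₀ (Nat.cast_nonneg n) hnle _)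
            · rw [hG_def]
              exact lintegral_mono_set (Metric.ball_subset_ball hle)
    have hinv : (t / (2 * r)) * (2 * r / t) = 1 := by field_simp
    calc ENNReal.ofReal ((t / (2 * r)) ^ (d + 2)) * G r
        ≤ ENNReal.ofReal ((t / (2 * r)) ^ (d + 2)) *
            (ENNReal.ofReal ((2 * r / t) ^ (d + 2)) * G t) := mul_le_mul_right hmain _
      _ = ENNReal.ofReal (((t / (2 * r)) * (2 * r / t)) ^ (d + 2)) * G t := by
          rw [← mul_assoc, ← ENNReal.ofReal_mul (by positivity), ← mul_pow]
      _ = G t := by rw [hinv, one_pow, ENNReal.ofReal_one, one_mul]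

  -- V, W
  set V : ℝ → ℝ≥0∞ := fun t => ENNReal.ofReal (d / (t ^ (d + 1) * ψm t)) with hV_def
  have hV_meas : Measurable V := by
    apply Measurable.ennreal_ofReal
    exact measurable_const.div ((measurable_id.pow_const (d+1)).mul hψm_meas)
  set W : ℝ → ℝ≥0∞ := fun s => ENNReal.ofReal (1 / (s ^ d * ψm s)) with hW_def
  have hW_meas : Measurable W := by
    apply Measurable.ennreal_ofReal
    exact measurable_const.div ((measurable_id.pow_const d).mul hψm_meas)
  have hW_tail : ∀ s : ℝ, 0 < s → (∫⁻ t in Ioi s, V t) ≤ W s := by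
    intro s hs
    have hψs := hψ_pos s hs
    set a : ℝ := -((d : ℝ) + 1) with ha_def
    have hd1 : (1 : ℝ) ≤ (d : ℝ) := by exact_mod_cast hd
    have ha : a < -1 := by rw [ha_def]; linarith
    have hIc : IntegrableOn (fun t : ℝ => t ^ a) (Ioi s) := integrableOn_Ioi_rpow_of_lt ha hs
    have hval : ∫ t in Ioi s, t ^ a = -s ^ (a + 1) / (a + 1) := integral_Ioi_rpow_of_lt ha hs
    have hrpow : ∀ t : ℝ, 0 < t → t ^ a = (t ^ (d + 1))⁻¹ := by
      intro t ht
      rw [ha_def, Real.rpow_neg ht.le, ← Real.rpow_natCast t (d + 1)]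
      norm_num
    have hmeasR : Measurable fun t : ℝ => ENNReal.ofReal ((1 / ψ s) * ((d : ℝ) * t ^ a)) := by
      fun_prop
    have hpt : ∀ t ∈ Ioi s, V t ≤ ENNReal.ofReal ((1 / ψ s) * ((d : ℝ) * t ^ a)) := by
      intro t ht
      have hts : s < t := ht
      have ht0 : 0 < t := hs.trans hts
      rw [hV_def]
      apply ENNReal.ofReal_le_ofReal
      have heq : (1 / ψ s) * ((d : ℝ) * t ^ a) = d / (t ^ (d + 1) * ψ s) := by
        rw [hrpow t ht0]; field_simp
      rw [heq, hψm_eq t ht0]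
      have hψt := hψ_pos t ht0
      have hψst := hψ_mono s t hs hts.le
      rw [div_le_div_iff₀ (by positivity) (by positivity)]
      gcongr
    have hWs : W s = ENNReal.ofReal (1 / (s ^ d * ψ s)) := by
      rw [hW_def]; simp only []; rw [hψm_eq s hs]
    rw [hWs]
    calc (∫⁻ t in Ioi s, V t)
        ≤ ∫⁻ t in Ioi s, ENNReal.ofReal ((1 / ψ s) * ((d : ℝ) * t ^ a)) :=
          setLIntegral_mono hmeasR hpt
      _ = ENNReal.ofReal (∫ t in Ioi s, (1 / ψ s) * ((d : ℝ) * t ^ a)) := by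
          rw [← ofReal_integral_eq_lintegral_ofReal (((hIc.const_mul _).const_mul _))
            ((ae_restrict_iff' measurableSet_Ioi).2 (Filter.Eventually.of_forall fun t ht => by
              have ht0 : 0 < t := hs.trans ht
              have hta : (0:ℝ) ≤ t ^ a := Real.rpow_nonneg ht0.le a
              positivity))]
      _ = ENNReal.ofReal ((1 / ψ s) * ((d : ℝ) * (-s ^ (a + 1) / (a + 1)))) := by
          rw [integral_const_mul, integral_const_mul, hval]
      _ = ENNReal.ofReal (1 / (s ^ d * ψ s)) := by
          congr 1
          have h1 : a + 1 = -(d : ℝ) := by rw [ha_def]; ring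
          rw [h1]
          have h2 : s ^ (-(d : ℝ)) = (s ^ d)⁻¹ := by
            rw [Real.rpow_neg hs.le, ← Real.rpow_natCast s d]
          rw [h2]
          have hd0 : (d : ℝ) ≠ 0 := by linarith
          have hsd : (0:ℝ) < s ^ d := by positivity
          field_simp

  -- pointwise kernel lower bound
  have hpoint : ∀ x y : Euc d,
      ENNReal.ofReal (Cb⁻¹) * (ENNReal.ofReal ((f x - f y) ^ 2) * W (dist x y)) ≤
        ENNReal.ofReal ((f x - f y) ^ 2 * J x y) := by
    intro x y
    by_cases hxy : y = x
    · subst hxy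
      simp [sub_self]
    · have hxy' : x ≠ y := fun hc => hxy hc.symm
      have hD : 0 < dist x y := dist_pos.2 hxy'
      have hψD := hψ_pos _ hD
      have hJl := hJ_lower x y hxy'
      have hWd : W (dist x y) = ENNReal.ofReal (1 / (dist x y ^ d * ψ (dist x y))) := by
        rw [hW_def]; simp only []; rw [hψm_eq _ hD]
      rw [hWd, ← ENNReal.ofReal_mul (sq_nonneg _), ← ENNReal.ofReal_mul (by positivity)]
      apply ENNReal.ofReal_le_ofReal
      have h1 : Cb⁻¹ * ((f x - f y) ^ 2 * (1 / (dist x y ^ d * ψ (dist x y))))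
          = (f x - f y) ^ 2 * (Cb⁻¹ / (dist x y ^ d * ψ (dist x y))) := by ring
      rw [h1]
      exact mul_le_mul_of_nonneg_left hJl (sq_nonneg _)
  -- the big lower bound for the energy
  have hRHS : ENNReal.ofReal (Cb⁻¹) * ∫⁻ t in Ioo (0:ℝ) r, V t * G t ≤
      ∫⁻ x, ∫⁻ y, ENNReal.ofReal ((f x - f y) ^ 2 * J x y) := by
    set S : Set (Euc d × ℝ) := {p | ‖p.1‖ < p.2} with hS_def
    have hS_meas : MeasurableSet S := measurableSet_lt measurable_fst.norm measurable_snd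
    have hQmeas : Measurable (Function.uncurry fun (t : ℝ) (h : Euc d) =>
        g h * (V t * S.indicator (fun _ => (1:ℝ≥0∞)) (h, t))) := by
      apply Measurable.mul
      · exact hg_meas.comp measurable_snd
      · exact (hV_meas.comp measurable_fst).mul
          ((measurable_const.indicator hS_meas).comp (measurable_snd.prodMk measurable_fst))
    have hQmeas2 : Measurable (Function.uncurry fun (h : Euc d) (x : Euc d) =>
        ENNReal.ofReal ((f x - f (x + h)) ^ 2) * W ‖h‖) := by
      refine Measurable.mul (f := fun p : Euc d × Euc d => ENNReal.ofReal ((f p.2 - f (p.2 + p.1)) ^ 2)) (g := fun p => W ‖p.1‖) ?_ ?_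
      · exact hker.comp (measurable_snd.prodMk measurable_fst)
      · exact hW_meas.comp (measurable_norm.comp measurable_fst)
    calc ENNReal.ofReal (Cb⁻¹) * ∫⁻ t in Ioo (0:ℝ) r, V t * G t
        ≤ ENNReal.ofReal (Cb⁻¹) * ∫⁻ t, V t * G t :=
          mul_le_mul_right (lintegral_mono' Measure.restrict_le_self le_rfl) _
      _ = ENNReal.ofReal (Cb⁻¹) *
            ∫⁻ t, ∫⁻ h, g h * (V t * S.indicator (fun _ => (1:ℝ≥0∞)) (h, t)) := by
          congr 1
          refine lintegral_congr fun t => ?_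
          have hpt : ∀ h : Euc d, g h * (V t * S.indicator (fun _ => (1:ℝ≥0∞)) (h, t))
              = V t * (Metric.ball (0 : Euc d) t).indicator g h := by
            intro h
            by_cases hh : ‖h‖ < t
            · rw [Set.indicator_of_mem (show (h, t) ∈ S from hh),
                Set.indicator_of_mem (mem_ball_zero_iff.2 hh), mul_one]
              ring
            · rw [Set.indicator_of_notMem (show (h, t) ∉ S from hh),
                Set.indicator_of_notMem (fun hmem => hh (mem_ball_zero_iff.1 hmem)),
                mul_zero, mul_zero]
          calc V t * G t
              = V t * ∫⁻ h, (Metric.ball (0 : Euc d) t).indicator g h := by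
                rw [hG_def]; simp only []
                rw [lintegral_indicator measurableSet_ball]
            _ = ∫⁻ h, V t * (Metric.ball (0 : Euc d) t).indicator g h :=
                (lintegral_const_mul _ (hg_meas.indicator measurableSet_ball)).symm
            _ = ∫⁻ h, g h * (V t * S.indicator (fun _ => (1:ℝ≥0∞)) (h, t)) :=
                lintegral_congr fun h => (hpt h).symm
      _ = ENNReal.ofReal (Cb⁻¹) *
            ∫⁻ h, ∫⁻ t, g h * (V t * S.indicator (fun _ => (1:ℝ≥0∞)) (h, t)) := by
          rw [lintegral_lintegral_swap hQmeas.aemeasurable]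
      _ = ENNReal.ofReal (Cb⁻¹) * ∫⁻ h, g h * ∫⁻ t in Ioi ‖h‖, V t := by
          congr 1
          refine lintegral_congr fun h => ?_
          have hmt : Measurable fun t : ℝ => V t * S.indicator (fun _ => (1:ℝ≥0∞)) (h, t) := by
            apply hV_meas.mul
            exact (measurable_const.indicator hS_meas).comp
              (measurable_const.prodMk measurable_id)
          rw [lintegral_const_mul _ hmt]
          congr 1
          have hind : ∀ t : ℝ, V t * S.indicator (fun _ => (1:ℝ≥0∞)) (h, t)
              = (Ioi ‖h‖).indicator V t := by
            intro t
            by_cases hh : ‖h‖ < t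
            · rw [Set.indicator_of_mem (show (h, t) ∈ S from hh), mul_one,
                Set.indicator_of_mem (mem_Ioi.2 hh)]
            · rw [Set.indicator_of_notMem (show (h, t) ∉ S from hh), mul_zero,
                Set.indicator_of_notMem (by simpa using hh)]
          rw [lintegral_congr hind, lintegral_indicator measurableSet_Ioi]
      _ ≤ ENNReal.ofReal (Cb⁻¹) * ∫⁻ h, g h * W ‖h‖ := by
          apply mul_le_mul_right
          refine lintegral_mono fun h => ?_
          by_cases hh : h = 0
          · subst hh; simp [hg0]
          · exact mul_le_mul_right (hW_tail ‖h‖ (norm_pos_iff.2 hh)) _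
      _ = ENNReal.ofReal (Cb⁻¹) *
            ∫⁻ h, ∫⁻ x, ENNReal.ofReal ((f x - f (x + h)) ^ 2) * W ‖h‖ := by
          congr 1
          refine lintegral_congr fun h => ?_
          rw [hg_def]; simp only []
          rw [lintegral_mul_const _ (by
            exact Measurable.ennreal_ofReal ((hf.sub (hf.comp (measurable_add_const h))).pow_const 2))]
      _ = ENNReal.ofReal (Cb⁻¹) *
            ∫⁻ x, ∫⁻ h, ENNReal.ofReal ((f x - f (x + h)) ^ 2) * W ‖h‖ := by
          rw [lintegral_lintegral_swap hQmeas2.aemeasurable]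
      _ = ENNReal.ofReal (Cb⁻¹) *
            ∫⁻ x, ∫⁻ y, ENNReal.ofReal ((f x - f y) ^ 2) * W (dist x y) := by
          congr 1
          refine lintegral_congr fun x => ?_
          have hFmeas : Measurable fun y : Euc d =>
              ENNReal.ofReal ((f x - f y) ^ 2) * W (dist x y) := by
            refine Measurable.mul (f := fun y : Euc d => ENNReal.ofReal ((f x - f y) ^ 2)) (g := fun y => W (dist x y)) ?_ ?_
            · exact Measurable.ennreal_ofReal ((measurable_const.sub hf).pow_const 2)
            · exact hW_meas.comp (measurable_const.dist measurable_id)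
          have := (measurePreserving_add_right (volume : Measure (Euc d)) x).lintegral_comp
            hFmeas
          rw [← this]
          refine lintegral_congr fun h => ?_
          have hdist : dist x (h + x) = ‖h‖ := by
            rw [dist_eq_norm]
            have : x - (h + x) = -h := by abel
            rw [this, norm_neg]
          rw [hdist, add_comm x h]
      _ = ∫⁻ x, ∫⁻ y, ENNReal.ofReal (Cb⁻¹) *
            (ENNReal.ofReal ((f x - f y) ^ 2) * W (dist x y)) := by
          rw [← lintegral_const_mul' _ _ ENNReal.ofReal_ne_top]
          refine lintegral_congr fun x => ?_
          rw [← lintegral_const_mul' _ _ ENNReal.ofReal_ne_top]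
      _ ≤ ∫⁻ x, ∫⁻ y, ENNReal.ofReal ((f x - f y) ^ 2 * J x y) :=
          lintegral_mono fun x => lintegral_mono fun y => hpoint x y
  -- value of the scalar integral
  set Ir : ℝ := ∫ s in Ioo (0:ℝ) r, s / ψ s with hIr_def
  have hIr_pos : 0 < Ir := by
    rw [hIr_def]
    have hnn : 0 ≤ᵐ[volume.restrict (Ioo (0:ℝ) r)] fun t => t / ψ t :=
      (ae_restrict_iff' measurableSet_Ioo).2 (Filter.Eventually.of_forall fun t ht =>
        div_nonneg ht.1.le (hψ_pos t ht.1).le)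
    rw [setIntegral_pos_iff_support_of_nonneg_ae hnn (hψ_int r hr)]
    have hsub : Ioo (0:ℝ) r ⊆ Function.support (fun t => t / ψ t) ∩ Ioo (0:ℝ) r :=
      fun t ht => ⟨ne_of_gt (div_pos ht.1 (hψ_pos t ht.1)), ht⟩
    calc (0:ℝ≥0∞) < volume (Ioo (0:ℝ) r) := by
          rw [Real.volume_Ioo]
          simpa using ENNReal.ofReal_pos.2 (by linarith)
      _ ≤ volume (Function.support (fun t => t / ψ t) ∩ Ioo (0:ℝ) r) := measure_mono hsub
  set c0 : ℝ := (d : ℝ) / (2 * r) ^ (d + 2) with hc0_def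
  have hc0_pos : 0 < c0 := by
    rw [hc0_def]
    have hd1 : (1:ℝ) ≤ (d:ℝ) := by exact_mod_cast hd
    positivity
  have hSval : ENNReal.ofReal (c0 * Ir) * G r ≤ ∫⁻ t in Ioo (0:ℝ) r, V t * G t := by
    have hEq : EqOn (fun t : ℝ => t / ψ t) (fun t : ℝ => t / ψm t) (Ioo (0:ℝ) r) :=
      fun t ht => by simp only []; rw [hψm_eq t ht.1]
    have hInt : IntegrableOn (fun t : ℝ => c0 * (t / ψm t)) (Ioo (0:ℝ) r) :=
      (((hψ_int r hr).congr_fun hEq measurableSet_Ioo).const_mul c0)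
    have hnn : 0 ≤ᵐ[volume.restrict (Ioo (0:ℝ) r)] fun t => c0 * (t / ψm t) :=
      (ae_restrict_iff' measurableSet_Ioo).2 (Filter.Eventually.of_forall fun t ht => by
        have h1 : 0 < ψm t := by rw [hψm_eq t ht.1]; exact hψ_pos t ht.1
        exact mul_nonneg hc0_pos.le (div_nonneg ht.1.le h1.le))
    have hIeq : ∫ t in Ioo (0:ℝ) r, c0 * (t / ψm t) = c0 * Ir := by
      rw [integral_const_mul, hIr_def]
      congr 1
      exact setIntegral_congr_fun measurableSet_Ioo hEq.symm
    calc ENNReal.ofReal (c0 * Ir) * G r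
        = (∫⁻ t in Ioo (0:ℝ) r, ENNReal.ofReal (c0 * (t / ψm t))) * G r := by
          rw [← ofReal_integral_eq_lintegral_ofReal hInt hnn, hIeq]
      _ ≤ ∫⁻ t in Ioo (0:ℝ) r, V t * G t := by
          have hmm : Measurable fun t : ℝ => ENNReal.ofReal (c0 * (t / ψm t)) := by
            apply Measurable.ennreal_ofReal
            exact (measurable_id.div hψm_meas).const_mul c0
          rw [← lintegral_mul_const _ hmm]
          refine setLIntegral_mono (hV_meas.mul hG_meas) fun t ht => ?_
          have ht0 : 0 < t := ht.1
          have htr : t ≤ r := ht.2.le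
          have hψt := hψ_pos t ht0
          have h1 : ENNReal.ofReal (c0 * (t / ψm t))
              = V t * ENNReal.ofReal ((t / (2 * r)) ^ (d + 2)) := by
            rw [hV_def]; simp only []
            rw [hψm_eq t ht0, ← ENNReal.ofReal_mul (by positivity)]
            congr 1
            rw [hc0_def]
            have h2r : (0:ℝ) < 2 * r := by linarith
            rw [div_pow, mul_pow]
            field_simp
            ring
          rw [h1, mul_assoc]
          exact mul_le_mul_right (hGt t ht0 htr) _
  -- final assembly
  have hEcore : ENNReal.ofReal (Cb⁻¹ * (c0 * Ir)) * G r ≤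
      ∫⁻ x, ∫⁻ y, ENNReal.ofReal ((f x - f y) ^ 2 * J x y) := by
    calc ENNReal.ofReal (Cb⁻¹ * (c0 * Ir)) * G r
        = ENNReal.ofReal (Cb⁻¹) * (ENNReal.ofReal (c0 * Ir) * G r) := by
          rw [ENNReal.ofReal_mul (by positivity), mul_assoc]
      _ ≤ ENNReal.ofReal (Cb⁻¹) * ∫⁻ t in Ioo (0:ℝ) r, V t * G t :=
          mul_le_mul_right hSval _
      _ ≤ _ := hRHS
  have hΦr : Φ r = r ^ 2 / (2 * Ir) := hΦ r hr
  have hΦpos : 0 < Φ r := by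
    rw [hΦr]
    exact div_pos (by positivity) (by linarith)
  have hscalar : 1 / r ^ d ≤ (2 ^ (d + 3) * Cb * Φ r) * (Cb⁻¹ * (c0 * Ir)) := by
    have hd1 : (1:ℝ) ≤ (d:ℝ) := by exact_mod_cast hd
    have hkey : (2 ^ (d + 3) * Cb * Φ r) * (Cb⁻¹ * (c0 * Ir)) = (d : ℝ) / r ^ d := by
      rw [hΦr, hc0_def]
      have h2p : ((2:ℝ) * r) ^ (d + 2) = 2 ^ (d + 2) * r ^ (d + 2) := mul_pow _ _ _
      have hr2 : r ^ (d + 2) = r ^ d * r ^ 2 := by ring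
      rw [h2p, hr2]
      have h23 : (2:ℝ) ^ (d + 3) = 2 ^ (d + 2) * 2 := by ring
      rw [h23]
      field_simp
    rw [hkey]
    have hrd : (0:ℝ) < r ^ d := by positivity
    exact (div_le_div_iff_of_pos_right hrd).2 hd1
  rw [hLHS]
  calc ENNReal.ofReal (1 / r ^ d) * G r
      ≤ ENNReal.ofReal ((2 ^ (d + 3) * Cb * Φ r) * (Cb⁻¹ * (c0 * Ir))) * G r :=
        mul_le_mul_left (ENNReal.ofReal_le_ofReal hscalar) _
    _ = ENNReal.ofReal (2 ^ (d + 3) * Cb * Φ r) * (ENNReal.ofReal (Cb⁻¹ * (c0 * Ir)) * G r) := by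
        rw [ENNReal.ofReal_mul (mul_nonneg (by positivity) hΦpos.le), mul_assoc]
    _ ≤ ENNReal.ofReal (2 ^ (d + 3) * Cb * Φ r) *
          ∫⁻ x, ∫⁻ y, ENNReal.ofReal ((f x - f y) ^ 2 * J x y) :=
        mul_le_mul_right hEcore _
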